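/- For a chronological map f : T₁ → T₂ between game trees, if the induced map f̄ : Run(T₁) → Run(T₂) is surjective, then f is surjective. The converse fails: there exist game trees T₁, T₂ and a surjective chronological map f : T₁ → T₂ such that f̄ is not surjective. -/

import Mathlib

open Classical

/-- A game tree over `M`: a set of finite sequences closed under truncation,
in which every element admits a one-step extension. -/
def IsGameTree {M : Type*} (T : Set (List M)) : Prop :=
  (∀ t ∈ T, ∀ k ≤ t.length, t.take k ∈ T) ∧ (∀ t ∈ T, ∃ x : M, t ++ [x] ∈ T)

/-- The initial segment of length `n` of an infinite sequence. -/
def runPre {M : Type*} (R : ℕ → M) (n : ℕ) : List M := List.ofFn fun i : Fin n => R i.1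

/-- The runs (branches) of a game tree. -/
def GameRun {M : Type*} (T : Set (List M)) : Set (ℕ → M) := {R | ∀ n : ℕ, runPre R n ∈ T}

/-- A chronological map between game trees: preserves length and truncation. -/
def IsChron {M N : Type*} (T₁ : Set (List M)) (T₂ : Set (List N))
    (f : List M → List N) : Prop :=
  (∀ t ∈ T₁, f t ∈ T₂) ∧ (∀ t ∈ T₁, (f t).length = t.length) ∧
    (∀ t ∈ T₁, ∀ k ≤ t.length, f (t.take k) = (f t).take k)

/-- Every node of a game tree lies on a run. -/
lemma exists_run_through {N : Type} (T : Set (List N)) (hT : IsGameTree T)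
    (s : List N) (hs : s ∈ T) : ∃ R ∈ GameRun T, runPre R s.length = s := by
  obtain ⟨x₀, -⟩ := hT.2 s hs
  -- one-step extension function
  set e : List N → List N := fun t => if h : ∃ x, t ++ [x] ∈ T then t ++ [h.choose] else t
    with he
  set g : ℕ → List N := fun n => e^[n] s with hg
  have hstep : ∀ t ∈ T, e t ∈ T ∧ t <+: e t ∧ (e t).length = t.length + 1 := by
    intro t ht
    have h : ∃ x, t ++ [x] ∈ T := hT.2 t ht
    simp only [he, dif_pos h]
    exact ⟨h.choose_spec, ⟨[h.choose], rfl⟩, by simp⟩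
  have hgmem : ∀ n, g n ∈ T ∧ (g n).length = s.length + n := by
    intro n
    induction n with
    | zero => simpa [hg] using hs
    | succ n ih =>
      have := hstep (g n) ih.1
      constructor
      · simpa [hg, Function.iterate_succ_apply'] using this.1
      · rw [hg]; simp only [Function.iterate_succ_apply']
        rw [this.2.2]; rw [ih.2]; omega
  have hpref : ∀ n m, n ≤ m → g n <+: g m := by
    intro n m hnm
    induction m with
    | zero => simp at hnm; simp [hnm]
    | succ m ih =>
      rcases Nat.lt_or_ge n (m + 1) with h | h
      · refine (ih (by omega)).trans ?_
        have := hstep (g m) (hgmem m).1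
        simpa [hg, Function.iterate_succ_apply'] using this.2.1
      · have : n = m + 1 := by omega
        simp [this]
  set R : ℕ → N := fun k => (g (k + 1)).getD k x₀ with hR
  have hlen : ∀ n, n ≤ (g n).length := fun n => by rw [(hgmem n).2]; omega
  have key : ∀ n, runPre R n = (g n).take n := by
    intro n
    apply List.ext_getElem
    · simp [runPre, (hgmem n).2]
    · intro i h1 h2
      have hi : i < n := by simpa [runPre] using h1
      simp only [runPre]
      rw [List.getElem_ofFn]
      rw [List.getElem_take]
      have hilen : i < (g (i + 1)).length := by rw [(hgmem (i + 1)).2]; omega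
      have hp := hpref (i + 1) n hi
      have := hp.getElem (i := i) hilen
      simp only [hR]
      rw [List.getD_eq_getElem _ _ hilen, this]
  refine ⟨R, ?_, ?_⟩
  · intro n
    rw [key n]
    exact hT.1 (g n) (hgmem n).1 n (hlen n)
  · rw [key s.length]
    have hp := hpref 0 s.length (Nat.zero_le _)
    simp only [hg, Function.iterate_zero_apply] at hp
    obtain ⟨t, ht⟩ := hp
    have h2 : g s.length = s ++ t := ht.symm
    rw [h2, List.take_left]

/-- The counterexample map. -/
def cf : List ℕ → List ℕ := fun l =>
  List.replicate (min l.length (l.headD 0)) 1 ++ List.replicate (l.length - l.headD 0) 0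

lemma cf_replicate (n k : ℕ) :
    cf (List.replicate n k) = List.replicate (min n k) 1 ++ List.replicate (n - k) 0 := by
  cases n with
  | zero => simp [cf]
  | succ m => simp [cf, List.replicate_succ]

theorem run_surjective_implies_tree_surjective_not_conversely :
    (∀ (M N : Type) (T₁ : Set (List M)) (T₂ : Set (List N)) (f : List M → List N),
        IsGameTree T₁ → IsGameTree T₂ → IsChron T₁ T₂ f →
        (∀ R' ∈ GameRun T₂, ∃ R ∈ GameRun T₁, ∀ n : ℕ, runPre R' n = f (runPre R n)) →
        ∀ s ∈ T₂, ∃ t ∈ T₁, f t = s) ∧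
    (∃ (T₁ T₂ : Set (List ℕ)) (f : List ℕ → List ℕ),
        IsGameTree T₁ ∧ IsGameTree T₂ ∧ IsChron T₁ T₂ f ∧
        (∀ s ∈ T₂, ∃ t ∈ T₁, f t = s) ∧
        ¬ (∀ R' ∈ GameRun T₂, ∃ R ∈ GameRun T₁,
            ∀ n : ℕ, runPre R' n = f (runPre R n))) := by
  constructor
  · intro M N T₁ T₂ f hT₁ hT₂ hf hsurj s hs
    obtain ⟨R', hR', hRs⟩ := exists_run_through T₂ hT₂ s hs
    obtain ⟨R, hR, hn⟩ := hsurj R' hR'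
    refine ⟨runPre R s.length, hR s.length, ?_⟩
    rw [← hn s.length, hRs]
  · refine ⟨{l | ∃ n k, l = List.replicate n k},
      {l | ∃ a b, l = List.replicate a 1 ++ List.replicate b 0}, cf, ?_, ?_, ?_, ?_, ?_⟩
    · constructor
      · rintro t ⟨n, k, rfl⟩ m hm
        exact ⟨min m n, k, by rw [List.take_replicate]⟩
      · rintro t ⟨n, k, rfl⟩
        exact ⟨k, n + 1, k, by rw [← List.replicate_succ']⟩
    · constructor
      · rintro t ⟨a, b, rfl⟩ m hm
        refine ⟨min m a, min (m - a) b, ?_⟩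
        rw [List.take_append, List.take_replicate, List.take_replicate,
          List.length_replicate]
      · rintro t ⟨a, b, rfl⟩
        exact ⟨0, a, b + 1, by rw [List.append_assoc, ← List.replicate_succ']⟩
    · refine ⟨?_, ?_, ?_⟩
      · rintro t ⟨n, k, rfl⟩
        exact ⟨min n k, n - k, cf_replicate n k⟩
      · rintro t ⟨n, k, rfl⟩
        rw [cf_replicate]; simp; omega
      · rintro t ⟨n, k, rfl⟩ m hm
        simp only [List.length_replicate] at hm
        rw [List.take_replicate, cf_replicate, cf_replicate,
          List.take_append, List.take_replicate, List.take_replicate,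
          List.length_replicate]
        have h1 : min (min m n) k = min m (min n k) := by omega
        have h2 : min m n - k = min (m - min n k) (n - k) := by omega
        rw [h1, h2]
    · rintro s ⟨a, b, rfl⟩
      rcases Nat.eq_zero_or_pos b with hb | hb
      · refine ⟨List.replicate a a, ⟨a, a, rfl⟩, ?_⟩
        rw [cf_replicate]; simp [hb]
      · refine ⟨List.replicate (a + b) a, ⟨a + b, a, rfl⟩, ?_⟩
        rw [cf_replicate]
        have : min (a + b) a = a := by omega
        rw [this]
        have h3 : a + b - a = b := by omega
        rw [h3]
    · intro hcon
      have hrun : (fun _ : ℕ => 1) ∈ GameRun {l | ∃ a b, l = List.replicate a 1 ++ List.replicate b 0} := by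
        intro n
        exact ⟨n, 0, by simp [runPre]⟩
      obtain ⟨R, hR, hn⟩ := hcon _ hrun
      set k := R 0 with hk
      obtain ⟨n', k', hrk⟩ := hR (k + 1)
      have hlen : n' = k + 1 := by
        have := congrArg List.length hrk
        simpa [runPre] using this.symm
      subst hlen
      have hhead : k' = k := by
        have := congrArg (fun l => l.getD 0 0) hrk
        simpa [runPre, List.getD_eq_getElem, List.getElem_ofFn] using this.symm
      subst hhead
      have h := hn (k + 1)
      rw [hrk, cf_replicate] at h
      have hmin : min (k + 1) k = k := by omega
      have hsub : k + 1 - k = 1 := by omega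
      rw [hmin, hsub] at h
      have := congrArg (List.count 0) h
      simp [runPre, List.count_replicate] at this
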